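/- Let A1, A2, A3 be a scalene triangle in the Euclidean plane (all side lengths distinct). Then the set of points P with dist(P,A1)·dist(A2,A3) = dist(P,A2)·dist(A1,A3) = dist(P,A3)·dist(A1,A2) contains at most two points. -/

import Mathlib

lemma aux_dep (v x y : EuclideanSpace ℝ (Fin 2)) (hv : v ≠ 0)
    (hx : (inner ℝ x v : ℝ) = 0) (hy : (inner ℝ y v : ℝ) = 0) (hx0 : x ≠ 0) :
    ∃ r : ℝ, y = r • x := by
  haveI : Fact (Module.finrank ℝ (EuclideanSpace ℝ (Fin 2)) = 1 + 1) := ⟨by simp⟩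
  have hfr : Module.finrank ℝ ((Submodule.span ℝ {v})ᗮ) = 1 :=
    Submodule.finrank_orthogonal_span_singleton hv
  obtain ⟨z, hz0, hz⟩ := finrank_eq_one_iff'.mp hfr
  have hxm : x ∈ (Submodule.span ℝ {v})ᗮ :=
    Submodule.mem_orthogonal_singleton_iff_inner_left.mpr hx
  have hym : y ∈ (Submodule.span ℝ {v})ᗮ :=
    Submodule.mem_orthogonal_singleton_iff_inner_left.mpr hy
  obtain ⟨cx, hcx⟩ := hz ⟨x, hxm⟩
  obtain ⟨cy, hcy⟩ := hz ⟨y, hym⟩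
  have hcx' : cx • (z : EuclideanSpace ℝ (Fin 2)) = x := congrArg Subtype.val hcx
  have hcy' : cy • (z : EuclideanSpace ℝ (Fin 2)) = y := congrArg Subtype.val hcy
  have hcx0 : cx ≠ 0 := by rintro rfl; simp at hcx'; exact hx0 hcx'.symm
  refine ⟨cy / cx, ?_⟩
  rw [← hcx', ← hcy', smul_smul, div_mul_cancel₀ _ hcx0]

/-- A scalene triangle has at most two isodynamic points. -/
theorem at_most_two_isodynamic_points
    (A₁ A₂ A₃ : EuclideanSpace ℝ (Fin 2))
    (hA : AffineIndependent ℝ ![A₁, A₂, A₃])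
    (hs₁ : dist A₁ A₂ ≠ dist A₁ A₃) (hs₂ : dist A₁ A₂ ≠ dist A₂ A₃)
    (hs₃ : dist A₁ A₃ ≠ dist A₂ A₃) :
    ∀ P ∈ {P : EuclideanSpace ℝ (Fin 2) |
        dist P A₁ * dist A₂ A₃ = dist P A₂ * dist A₁ A₃ ∧
        dist P A₂ * dist A₁ A₃ = dist P A₃ * dist A₁ A₂},
      ∀ Q ∈ {P : EuclideanSpace ℝ (Fin 2) |
        dist P A₁ * dist A₂ A₃ = dist P A₂ * dist A₁ A₃ ∧
        dist P A₂ * dist A₁ A₃ = dist P A₃ * dist A₁ A₂},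
      ∀ R ∈ {P : EuclideanSpace ℝ (Fin 2) |
        dist P A₁ * dist A₂ A₃ = dist P A₂ * dist A₁ A₃ ∧
        dist P A₂ * dist A₁ A₃ = dist P A₃ * dist A₁ A₂},
      P = Q ∨ P = R ∨ Q = R := by
  intro P hP Q hQ R hR
  simp only [Set.mem_setOf_eq] at hP hQ hR
  set a := dist A₂ A₃ with ha
  set b := dist A₁ A₃ with hb
  set c := dist A₁ A₂ with hc
  -- pairwise distinct vertices
  have h12 : A₁ ≠ A₂ := by
    intro h
    have : (0 : Fin 3) = 1 := hA.injective (by simpa using h)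
    simp at this
  have h13 : A₁ ≠ A₃ := by
    intro h
    have : (0 : Fin 3) = 2 := hA.injective (by simpa using h)
    simp at this
  have h23 : A₂ ≠ A₃ := by
    intro h
    have : (1 : Fin 3) = 2 := hA.injective (by simpa using h)
    simp at this
  have hapos : 0 < a := dist_pos.mpr h23
  have hbpos : 0 < b := dist_pos.mpr h13
  have hcpos : 0 < c := dist_pos.mpr h12
  have hα : a ^ 2 - b ^ 2 ≠ 0 := by
    have h1 : a - b ≠ 0 := sub_ne_zero.mpr (Ne.symm hs₃)
    have h2 : a + b ≠ 0 := by positivity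
    have : a ^ 2 - b ^ 2 = (a - b) * (a + b) := by ring
    rw [this]; exact mul_ne_zero h1 h2
  have hβ : b ^ 2 - c ^ 2 ≠ 0 := by
    have h1 : b - c ≠ 0 := sub_ne_zero.mpr (Ne.symm hs₁)
    have h2 : b + c ≠ 0 := by positivity
    have : b ^ 2 - c ^ 2 = (b - c) * (b + c) := by ring
    rw [this]; exact mul_ne_zero h1 h2
  -- squared, expanded equations
  have esq : ∀ X : EuclideanSpace ℝ (Fin 2),
      dist X A₁ * a = dist X A₂ * b → dist X A₂ * b = dist X A₃ * c →
      (‖X‖ ^ 2 - 2 * (inner ℝ X A₁ : ℝ) + ‖A₁‖ ^ 2) * a ^ 2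
        = (‖X‖ ^ 2 - 2 * (inner ℝ X A₂ : ℝ) + ‖A₂‖ ^ 2) * b ^ 2 ∧
      (‖X‖ ^ 2 - 2 * (inner ℝ X A₂ : ℝ) + ‖A₂‖ ^ 2) * b ^ 2
        = (‖X‖ ^ 2 - 2 * (inner ℝ X A₃ : ℝ) + ‖A₃‖ ^ 2) * c ^ 2 := by
    intro X h1 h2
    constructor
    · have h1' : ‖X - A₁‖ ^ 2 * a ^ 2 = ‖X - A₂‖ ^ 2 * b ^ 2 := by
        rw [← mul_pow, ← mul_pow, ← dist_eq_norm X A₁, ← dist_eq_norm X A₂, h1]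
      simpa only [norm_sub_sq_real] using h1'
    · have h2' : ‖X - A₂‖ ^ 2 * b ^ 2 = ‖X - A₃‖ ^ 2 * c ^ 2 := by
        rw [← mul_pow, ← mul_pow, ← dist_eq_norm X A₂, ← dist_eq_norm X A₃, h2]
      simpa only [norm_sub_sq_real] using h2'
  obtain ⟨eP1, eP2⟩ := esq P hP.1 hP.2
  obtain ⟨eQ1, eQ2⟩ := esq Q hQ.1 hQ.2
  obtain ⟨eR1, eR2⟩ := esq R hR.1 hR.2
  -- the radical axis direction
  set v : EuclideanSpace ℝ (Fin 2) :=
    ((b ^ 2 - c ^ 2) * a ^ 2) • (A₁ - A₂) + ((a ^ 2 - b ^ 2) * c ^ 2) • (A₃ - A₂) with hvdef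
  have hvne : v ≠ 0 := by
    intro hv0
    apply affineIndependent_iff_not_collinear.mp hA
    have hc1 : ((b ^ 2 - c ^ 2) * a ^ 2) ≠ 0 := mul_ne_zero hβ (by positivity)
    have h6 : ((b ^ 2 - c ^ 2) * a ^ 2) • (A₁ - A₂)
        = -(((a ^ 2 - b ^ 2) * c ^ 2) • (A₃ - A₂)) := eq_neg_of_add_eq_zero_left hv0
    have h5 : A₁ - A₂ = (((b ^ 2 - c ^ 2) * a ^ 2)⁻¹ * -((a ^ 2 - b ^ 2) * c ^ 2)) • (A₃ - A₂) := by
      have h7 := congrArg (fun w : EuclideanSpace ℝ (Fin 2) => ((b ^ 2 - c ^ 2) * a ^ 2)⁻¹ • w) h6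
      simp only [smul_smul, inv_mul_cancel₀ hc1, one_smul, smul_neg] at h7
      rw [h7, ← neg_smul, mul_neg]
    rw [collinear_iff_of_mem (show A₂ ∈ Set.range ![A₁, A₂, A₃] from ⟨1, rfl⟩)]
    refine ⟨A₃ - A₂, ?_⟩
    rintro p ⟨i, rfl⟩
    fin_cases i
    · refine ⟨((b ^ 2 - c ^ 2) * a ^ 2)⁻¹ * -((a ^ 2 - b ^ 2) * c ^ 2), ?_⟩
      show A₁ = _ • (A₃ - A₂) +ᵥ A₂
      rw [vadd_eq_add, ← h5]; abel
    · exact ⟨0, by simp⟩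
    · refine ⟨1, ?_⟩
      show A₃ = (1 : ℝ) • (A₃ - A₂) +ᵥ A₂
      rw [vadd_eq_add, one_smul]; abel
  -- all differences of solutions are orthogonal to v
  have key : ∀ X Y : EuclideanSpace ℝ (Fin 2),
      (‖X‖ ^ 2 - 2 * (inner ℝ X A₁ : ℝ) + ‖A₁‖ ^ 2) * a ^ 2
        = (‖X‖ ^ 2 - 2 * (inner ℝ X A₂ : ℝ) + ‖A₂‖ ^ 2) * b ^ 2 →
      (‖X‖ ^ 2 - 2 * (inner ℝ X A₂ : ℝ) + ‖A₂‖ ^ 2) * b ^ 2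
        = (‖X‖ ^ 2 - 2 * (inner ℝ X A₃ : ℝ) + ‖A₃‖ ^ 2) * c ^ 2 →
      (‖Y‖ ^ 2 - 2 * (inner ℝ Y A₁ : ℝ) + ‖A₁‖ ^ 2) * a ^ 2
        = (‖Y‖ ^ 2 - 2 * (inner ℝ Y A₂ : ℝ) + ‖A₂‖ ^ 2) * b ^ 2 →
      (‖Y‖ ^ 2 - 2 * (inner ℝ Y A₂ : ℝ) + ‖A₂‖ ^ 2) * b ^ 2
        = (‖Y‖ ^ 2 - 2 * (inner ℝ Y A₃ : ℝ) + ‖A₃‖ ^ 2) * c ^ 2 →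
      (inner ℝ (X - Y) v : ℝ) = 0 := by
    intro X Y hx1 hx2 hy1 hy2
    simp only [hvdef, inner_sub_left, inner_add_right, real_inner_smul_right, inner_sub_right]
    linear_combination (-(b ^ 2 - c ^ 2) / 2) * hx1 + ((b ^ 2 - c ^ 2) / 2) * hy1
      + ((a ^ 2 - b ^ 2) / 2) * hx2 - ((a ^ 2 - b ^ 2) / 2) * hy2
  by_contra hcon
  push_neg at hcon
  obtain ⟨hPQ, hPR, hQR⟩ := hcon
  have hu : Q - P ≠ 0 := sub_ne_zero.mpr (Ne.symm hPQ)
  obtain ⟨r, hr⟩ := aux_dep v (Q - P) (R - P) hvne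
    (key Q P eQ1 eQ2 eP1 eP2) (key R P eR1 eR2 eP1 eP2) hu
  set u := Q - P with hudef
  have hr0 : r ≠ 0 := by
    rintro rfl
    rw [zero_smul] at hr
    exact hPR (sub_eq_zero.mp hr).symm
  have hr1 : r ≠ 1 := by
    rintro rfl
    rw [one_smul] at hr
    exact hQR (sub_left_injective hr).symm
  have hQu : u + P = Q := sub_add_cancel Q P
  have hRu : r • u + P = R := by rw [← hr]; exact sub_add_cancel R P
  have hnQ : ‖Q‖ ^ 2 = ‖u‖ ^ 2 + 2 * (inner ℝ u P : ℝ) + ‖P‖ ^ 2 := by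
    rw [← hQu, norm_add_sq_real]
  have hiQ1 : (inner ℝ Q A₁ : ℝ) = (inner ℝ u A₁ : ℝ) + (inner ℝ P A₁ : ℝ) := by
    rw [← hQu, inner_add_left]
  have hiQ2 : (inner ℝ Q A₂ : ℝ) = (inner ℝ u A₂ : ℝ) + (inner ℝ P A₂ : ℝ) := by
    rw [← hQu, inner_add_left]
  have hnR : ‖R‖ ^ 2 = r ^ 2 * ‖u‖ ^ 2 + 2 * (r * (inner ℝ u P : ℝ)) + ‖P‖ ^ 2 := by
    rw [← hRu, norm_add_sq_real, norm_smul, real_inner_smul_left, Real.norm_eq_abs,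
      mul_pow, sq_abs]
  have hiR1 : (inner ℝ R A₁ : ℝ) = r * (inner ℝ u A₁ : ℝ) + (inner ℝ P A₁ : ℝ) := by
    rw [← hRu, inner_add_left, real_inner_smul_left]
  have hiR2 : (inner ℝ R A₂ : ℝ) = r * (inner ℝ u A₂ : ℝ) + (inner ℝ P A₂ : ℝ) := by
    rw [← hRu, inner_add_left, real_inner_smul_left]
  rw [hnQ, hiQ1, hiQ2] at eQ1
  rw [hnR, hiR1, hiR2] at eR1
  have hzero : (a ^ 2 - b ^ 2) * (r * (1 - r)) * ‖u‖ ^ 2 = 0 := by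
    linear_combination r * eQ1 - eR1 + (1 - r) * eP1
  have hU : ‖u‖ ^ 2 ≠ 0 := pow_ne_zero 2 (norm_ne_zero_iff.mpr hu)
  have hrr : r * (1 - r) ≠ 0 := mul_ne_zero hr0 (sub_ne_zero.mpr (Ne.symm hr1))
  exact (mul_ne_zero (mul_ne_zero hα hrr) hU) hzero
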